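/- Under the hypotheses of the envelope identity: if x*(y) is differentiable in y, the KKT conditions hold at x*(y) with multipliers μ*(y), and for every active constraint index i the composite function ψ_i(y) = h_i(x*(y)) satisfies ∇ψ_i(y) = 0, then (Dx*(y)/Dy)ᵀ · ∇_x L(x*(y), y) = 0. -/

import Mathlib

/-- Key step of the envelope identity: the chain-rule correction term vanishes,
i.e. `(Dx*(y)/Dy)ᵀ ∇_x L(x*(y), y) = 0` as a linear map. -/
theorem chain_rule_correction_vanishes {n m q : ℕ}
    (L : (Fin n → ℝ) → (Fin m → ℝ) → ℝ)
    (h : Fin q → (Fin n → ℝ) → ℝ)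
    (hL : ContDiff ℝ 1 (fun p : (Fin n → ℝ) × (Fin m → ℝ) => L p.1 p.2))
    (hh : ∀ i, ContDiff ℝ 1 (h i))
    (xs : (Fin m → ℝ) → (Fin n → ℝ)) (hxs : Differentiable ℝ xs)
    (y : Fin m → ℝ)
    (hfeas : ∀ i, 0 ≤ h i (xs y))
    (μ : Fin q → ℝ) (hμ : ∀ i, 0 ≤ μ i)
    (hKKT : fderiv ℝ (fun x => L x y) (xs y) = ∑ i, (μ i) • fderiv ℝ (h i) (xs y))
    (hcs : ∀ i, μ i * h i (xs y) = 0)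
    (hactive : ∀ i, h i (xs y) = 0 → fderiv ℝ (fun y' => h i (xs y')) y = 0) :
    (fderiv ℝ (fun x => L x y) (xs y)).comp (fderiv ℝ xs y) = 0 := by
  rw [hKKT]
  ext v
  simp only [ContinuousLinearMap.comp_apply, ContinuousLinearMap.coe_sum',
    Finset.sum_apply, ContinuousLinearMap.zero_apply, ContinuousLinearMap.smul_apply]
  refine Finset.sum_eq_zero fun i _ => ?_
  rcases mul_eq_zero.mp (hcs i) with hμ0 | hh0
  · simp [hμ0]
  · have hchain : fderiv ℝ (fun y' => h i (xs y')) y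
        = (fderiv ℝ (h i) (xs y)).comp (fderiv ℝ xs y) :=
      fderiv_comp y ((hh i).differentiable one_ne_zero).differentiableAt (hxs y)
    have := hactive i hh0
    rw [hchain] at this
    have := congrArg (fun f => f v) this
    simp only [ContinuousLinearMap.comp_apply, ContinuousLinearMap.zero_apply] at this
    simp [this]
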